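/- The complex power series C(X) = Σ_{n≥0} c_n X^n (with c_n ∈ {0,1} ⊂ ℂ) satisfies the functional equation C(X) = X(X+1) + X^3(X^4−1)/((X−1)(X^4+1)) · C(X^4) in the field of Laurent/formal power series over ℂ. -/

import Mathlib

open PowerSeries Finset

private lemma cast01 (a b : ℕ) (ha : a = 0 ∨ a = 1) (hb : b = 0 ∨ b = 1)
    (h : (a : ZMod 2) = b) : a = b := by
  rcases ha with rfl | rfl <;> rcases hb with rfl | rfl <;> first
    | rfl
    | (exfalso; revert h; decide)

section aux

variable (c : ℕ → ℕ) (hcv : ∀ n, c n = 0 ∨ c n = 1)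
    (hc0 : c 0 = 0) (hc1 : c 1 = 1) (hc2 : c 2 = 1) (hc3 : c 3 = 0)
    (h40 : ∀ n : ℕ, 1 ≤ n → c (4 * n) = c (4 * n - 1))
    (h41 : ∀ n : ℕ, 1 ≤ n → c (4 * n + 1) = c (4 * n - 1))
    (h42 : ∀ n : ℕ, 1 ≤ n → c (4 * n + 2) = c (4 * n - 1))
    (h43 : ∀ n : ℕ, 1 ≤ n → c (4 * n + 3) = (c (4 * n - 1) + c n) % 2)

include hc3 h43 in
private lemma dsum : ∀ m : ℕ, 1 ≤ m →
    (c (4 * m - 1) : ZMod 2) = ∑ j ∈ Finset.Ico 1 m, (c j : ZMod 2) := by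
  intro m hm
  induction m, hm using Nat.le_induction with
  | base => norm_num [hc3]
  | succ m hm ih =>
    have h := h43 m hm
    rw [show 4 * (m + 1) - 1 = 4 * m + 3 by omega, h, Finset.sum_Ico_succ_top hm, ← ih,
      ZMod.natCast_mod, Nat.cast_add]

include hc1 hc2 hc3 h40 h41 h42 h43 in
private lemma blocksum : ∀ t : ℕ, 1 ≤ t →
    (∑ j ∈ Finset.Ico 1 (4 * t + 2), (c j : ZMod 2)) = ∑ j ∈ Finset.Ico 1 t, (c j : ZMod 2) := by
  have h2 : (2 : ZMod 2) = 0 := by decide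
  intro t ht
  induction t, ht using Nat.le_induction with
  | base =>
    have v4 : c 4 = c 3 := by simpa using h40 1 le_rfl
    have v5 : c 5 = c 3 := by simpa using h41 1 le_rfl
    rw [Finset.sum_Ico_eq_sum_range]
    norm_num [Finset.sum_range_succ, hc1, hc2, hc3, v4, v5]
    all_goals exact h2
  | succ t ht ih =>
    have e2 : c (4 * t + 2) = c (4 * t - 1) := h42 t ht
    have e3 : c (4 * t + 3) = (c (4 * t - 1) + c t) % 2 := h43 t ht
    have e4 : c (4 * t + 4) = c (4 * t + 3) := by
      have := h40 (t + 1) (by omega)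
      rwa [show 4 * (t + 1) - 1 = 4 * t + 3 by omega, show 4 * (t + 1) = 4 * t + 4 by ring]
        at this
    have e5 : c (4 * t + 5) = c (4 * t + 3) := by
      have := h41 (t + 1) (by omega)
      rwa [show 4 * (t + 1) - 1 = 4 * t + 3 by omega,
        show 4 * (t + 1) + 1 = 4 * t + 5 by ring] at this
    rw [show 4 * (t + 1) + 2 = (4 * t + 5) + 1 by ring, Finset.sum_Ico_succ_top (by omega),
      show 4 * t + 5 = (4 * t + 4) + 1 from rfl, Finset.sum_Ico_succ_top (by omega),
      show 4 * t + 4 = (4 * t + 3) + 1 from rfl, Finset.sum_Ico_succ_top (by omega),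
      show 4 * t + 3 = (4 * t + 2) + 1 from rfl, Finset.sum_Ico_succ_top (by omega),
      ih, Finset.sum_Ico_succ_top ht, e2, e4, e5, e3, ZMod.natCast_mod, Nat.cast_add]
    linear_combination (2 * (c (4 * t - 1) : ZMod 2) + (c t : ZMod 2)) * h2

include hcv hc1 hc2 hc3 h40 h41 h42 h43 in
private lemma keyK : ∀ t : ℕ, 1 ≤ t → c (16 * t + 7) = c (4 * t - 1) := by
  intro t ht
  have hA := dsum c hc3 h43 (4 * t + 2) (by omega)
  rw [show 4 * (4 * t + 2) - 1 = 16 * t + 7 by omega] at hA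
  have hB := blocksum c hc1 hc2 hc3 h40 h41 h42 h43 t ht
  have hC := dsum c hc3 h43 t ht
  exact cast01 _ _ (hcv _) (hcv _) (by rw [hA, hB, ← hC])

include hc1 hc2 h40 h41 h42 h43 in
private lemma step_eq : ∀ m : ℕ, 1 ≤ m → m % 4 ≠ 2 → c m = c (m + 1) := by
  intro m hm hr
  rcases (by omega : m % 4 = 0 ∨ m % 4 = 1 ∨ m % 4 = 2 ∨ m % 4 = 3) with h | h | h | h
  · obtain ⟨t, rfl⟩ : ∃ t, m = 4 * t := ⟨m / 4, by omega⟩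
    have ht : 1 ≤ t := by omega
    rw [h40 t ht, h41 t ht]
  · obtain ⟨t, rfl⟩ : ∃ t, m = 4 * t + 1 := ⟨m / 4, by omega⟩
    rcases Nat.eq_zero_or_pos t with rfl | ht
    · simpa [hc1] using hc2.symm
    · rw [h41 t ht, show 4 * t + 1 + 1 = 4 * t + 2 from rfl, h42 t ht]
  · exact absurd h hr
  · obtain ⟨t, rfl⟩ : ∃ t, m = 4 * t + 3 := ⟨m / 4, by omega⟩
    have := h40 (t + 1) (by omega)
    rw [show 4 * (t + 1) - 1 = 4 * t + 3 by omega, show 4 * (t + 1) = 4 * t + 3 + 1 by ring]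
      at this
    exact this.symm

include hcv hc1 hc2 hc3 h40 h41 h42 h43 in
private lemma a_eq : ∀ m : ℕ, 1 ≤ m → m % 4 = 2 → c (4 * m - 1) = c m := by
  intro m hm hr
  obtain ⟨t, rfl⟩ : ∃ t, m = 4 * t + 2 := ⟨m / 4, by omega⟩
  rcases Nat.eq_zero_or_pos t with rfl | ht
  · have v7 : c 7 = 1 := by
      have := h43 1 le_rfl
      norm_num [hc3, hc1] at this
      simpa using this
    simpa [v7] using hc2.symm
  · have hK := keyK c hcv hc1 hc2 hc3 h40 h41 h42 h43 t ht
    rw [show 4 * (4 * t + 2) - 1 = 16 * t + 7 by omega, hK, ← h42 t ht]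

include hcv hc1 hc2 hc3 h40 h41 h42 h43 in
private lemma keyQ : ∀ m : ℕ, 1 ≤ m →
    c (4 * m - 1) + c (m + 1) = c (4 * m + 7) + c m := by
  intro m hm
  have hd1 : c (4 * m + 3) = (c (4 * m - 1) + c m) % 2 := h43 m hm
  have hd2 : c (4 * m + 7) = (c (4 * m + 3) + c (m + 1)) % 2 := by
    have := h43 (m + 1) (by omega)
    rwa [show 4 * (m + 1) - 1 = 4 * m + 3 by omega, show 4 * (m + 1) + 3 = 4 * m + 7 by ring]
      at this
  have b1 := hcv (4 * m - 1)
  have b2 := hcv m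
  have b3 := hcv (m + 1)
  by_cases hr : m % 4 = 2
  · have := a_eq c hcv hc1 hc2 hc3 h40 h41 h42 h43 m hm hr
    omega
  · have := step_eq c hc1 hc2 h40 h41 h42 h43 m hm hr
    omega

include hcv hc0 hc1 hc2 hc3 h40 h41 h42 h43 in
private lemma key_ps :
    (PowerSeries.mk fun n => (c n : ℂ)) * PowerSeries.X ^ 5
      + (PowerSeries.mk fun n => (c n : ℂ)) * PowerSeries.X ^ 1
      + PowerSeries.X ^ 5 + PowerSeries.X ^ 1
      + (PowerSeries.mk fun n => if n % 4 = 0 then ((c (n / 4) : ℂ)) else 0) * PowerSeries.X ^ 3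
    = (PowerSeries.mk fun n => (c n : ℂ)) * PowerSeries.X ^ 4
      + (PowerSeries.mk fun n => (c n : ℂ))
      + PowerSeries.X ^ 7 + PowerSeries.X ^ 3
      + (PowerSeries.mk fun n => if n % 4 = 0 then ((c (n / 4) : ℂ)) else 0)
          * PowerSeries.X ^ 7 := by
  have v4 : c 4 = 0 := by
    have := h40 1 le_rfl; norm_num at this; rw [this, hc3]
  have v5 : c 5 = 0 := by
    have := h41 1 le_rfl; norm_num at this; rw [this, hc3]
  have v6 : c 6 = 0 := by
    have := h42 1 le_rfl; norm_num at this; rw [this, hc3]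
  have v7 : c 7 = 1 := by
    have := h43 1 le_rfl; norm_num [hc3, hc1] at this; simpa using this
  have v8 : c 8 = 1 := by
    have := h40 2 (by norm_num); norm_num at this; rw [this, v7]
  have v9 : c 9 = 1 := by
    have := h41 2 (by norm_num); norm_num at this; rw [this, v7]
  have v10 : c 10 = 1 := by
    have := h42 2 (by norm_num); norm_num at this; rw [this, v7]
  ext n
  simp only [map_add, PowerSeries.coeff_mul_X_pow', PowerSeries.coeff_X_pow,
    PowerSeries.coeff_mk]
  rcases Nat.lt_or_ge n 11 with hn | hn
  · interval_cases n <;>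
      norm_num [hc0, hc1, hc2, hc3, v4, v5, v6, v7, v8, v9, v10]
  · obtain ⟨m, r, hr, rfl⟩ : ∃ m r, r < 4 ∧ n = 4 * m + r := ⟨n / 4, n % 4, by omega, by omega⟩
    interval_cases r
    · -- n = 4m
      have t1 : 5 ≤ 4 * m := by omega
      have t2 : 1 ≤ 4 * m := by omega
      have t3 : ¬(4 * m = 5) := by omega
      have t4 : ¬(4 * m = 1) := by omega
      have t5 : 3 ≤ 4 * m := by omega
      have t6 : ¬((4 * m - 3) % 4 = 0) := by omega
      have t7 : 4 ≤ 4 * m := by omega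
      have t8 : ¬(4 * m = 7) := by omega
      have t9 : ¬(4 * m = 3) := by omega
      have t10 : 7 ≤ 4 * m := by omega
      have t11 : ¬((4 * m - 7) % 4 = 0) := by omega
      simp only [t1, t2, t3, t4, t5, t6, t7, t8, t9, t10, t11, eq_self_iff_true, if_true,
        if_false, not_false_eq_true, add_zero, zero_add, ite_true, ite_false]
      rw [show 4 * m - 5 = 4 * (m - 1) - 1 by omega,
        show 4 * m - 1 = 4 * m - 1 by omega,
        show 4 * m - 4 = 4 * (m - 1) by omega,
        h40 (m - 1) (by omega), h40 m (by omega)]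
    · -- n = 4m+1
      have t1 : 5 ≤ 4 * m + 1 := by omega
      have t2 : 1 ≤ 4 * m + 1 := by omega
      have t3 : ¬(4 * m + 1 = 5) := by omega
      have t4 : ¬(4 * m + 1 = 1) := by omega
      have t5 : 3 ≤ 4 * m + 1 := by omega
      have t6 : ¬((4 * m + 1 - 3) % 4 = 0) := by omega
      have t7 : 4 ≤ 4 * m + 1 := by omega
      have t8 : ¬(4 * m + 1 = 7) := by omega
      have t9 : ¬(4 * m + 1 = 3) := by omega
      have t10 : 7 ≤ 4 * m + 1 := by omega
      have t11 : ¬((4 * m + 1 - 7) % 4 = 0) := by omega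
      simp only [t1, t2, t3, t4, t5, t6, t7, t8, t9, t10, t11, eq_self_iff_true, if_true,
        if_false, not_false_eq_true, add_zero, zero_add, ite_true, ite_false]
      rw [show 4 * m + 1 - 5 = 4 * (m - 1) by omega,
        show 4 * m + 1 - 1 = 4 * m by omega,
        show 4 * m + 1 - 4 = 4 * (m - 1) + 1 by omega,
        h40 (m - 1) (by omega), h41 (m - 1) (by omega), h40 m (by omega), h41 m (by omega)]
    · -- n = 4m+2
      have t1 : 5 ≤ 4 * m + 2 := by omega
      have t2 : 1 ≤ 4 * m + 2 := by omega
      have t3 : ¬(4 * m + 2 = 5) := by omega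
      have t4 : ¬(4 * m + 2 = 1) := by omega
      have t5 : 3 ≤ 4 * m + 2 := by omega
      have t6 : ¬((4 * m + 2 - 3) % 4 = 0) := by omega
      have t7 : 4 ≤ 4 * m + 2 := by omega
      have t8 : ¬(4 * m + 2 = 7) := by omega
      have t9 : ¬(4 * m + 2 = 3) := by omega
      have t10 : 7 ≤ 4 * m + 2 := by omega
      have t11 : ¬((4 * m + 2 - 7) % 4 = 0) := by omega
      simp only [t1, t2, t3, t4, t5, t6, t7, t8, t9, t10, t11, eq_self_iff_true, if_true,
        if_false, not_false_eq_true, add_zero, zero_add, ite_true, ite_false]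
      rw [show 4 * m + 2 - 5 = 4 * (m - 1) + 1 by omega,
        show 4 * m + 2 - 1 = 4 * m + 1 by omega,
        show 4 * m + 2 - 4 = 4 * (m - 1) + 2 by omega,
        h41 (m - 1) (by omega), h42 (m - 1) (by omega), h41 m (by omega), h42 m (by omega)]
    · -- n = 4m+3
      have t1 : 5 ≤ 4 * m + 3 := by omega
      have t2 : 1 ≤ 4 * m + 3 := by omega
      have t3 : ¬(4 * m + 3 = 5) := by omega
      have t4 : ¬(4 * m + 3 = 1) := by omega
      have t5 : 3 ≤ 4 * m + 3 := by omega
      have t6 : (4 * m + 3 - 3) % 4 = 0 := by omega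
      have t6' : (4 * m + 3 - 3) / 4 = m := by omega
      have t7 : 4 ≤ 4 * m + 3 := by omega
      have t8 : ¬(4 * m + 3 = 7) := by omega
      have t9 : ¬(4 * m + 3 = 3) := by omega
      have t10 : 7 ≤ 4 * m + 3 := by omega
      have t11 : (4 * m + 3 - 7) % 4 = 0 := by omega
      have t11' : (4 * m + 3 - 7) / 4 = m - 1 := by omega
      simp only [t1, t2, t3, t4, t5, t6, t6', t7, t8, t9, t10, t11, t11', eq_self_iff_true,
        if_true, if_false, not_false_eq_true, add_zero, zero_add, ite_true, ite_false]
      rw [show 4 * m + 3 - 5 = 4 * (m - 1) + 2 by omega,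
        show 4 * m + 3 - 1 = 4 * m + 2 by omega,
        show 4 * m + 3 - 4 = 4 * m - 1 by omega,
        h42 (m - 1) (by omega), h42 m (by omega)]
      have hQ := keyQ c hcv hc1 hc2 hc3 h40 h41 h42 h43 (m - 1) (by omega)
      rw [show m - 1 + 1 = m by omega, show 4 * (m - 1) + 7 = 4 * m + 3 by omega] at hQ
      have hnat : c (4 * (m - 1) - 1) + c (4 * m - 1) + c m
          = c (4 * m - 1) + c (4 * m + 3) + c (m - 1) := by omega
      exact_mod_cast hnat

end aux

set_option maxHeartbeats 1000000 in
private lemma laurent_helper (A P Q B D : LaurentSeries ℂ) (hD : D ≠ 0)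
    (h : (A - P) * D = Q * B) : A = P + Q / D * B := by
  field_simp
  linear_combination h

set_option maxHeartbeats 1000000 in
/-- The complex power series `C(X) = ∑ cₙ Xⁿ` satisfies the functional equation
`C(X) = X(X+1) + X³(X⁴−1)/((X−1)(X⁴+1)) · C(X⁴)` in the field of formal Laurent
series over `ℂ`. Here `C(X⁴)` is the power series whose `4n`-th coefficient is
`cₙ` and whose other coefficients vanish. -/
theorem iptm_functional_equation (c : ℕ → ℕ) (hcv : ∀ n, c n = 0 ∨ c n = 1)
    (hc0 : c 0 = 0) (hc1 : c 1 = 1) (hc2 : c 2 = 1) (hc3 : c 3 = 0)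
    (h40 : ∀ n : ℕ, 1 ≤ n → c (4 * n) = c (4 * n - 1))
    (h41 : ∀ n : ℕ, 1 ≤ n → c (4 * n + 1) = c (4 * n - 1))
    (h42 : ∀ n : ℕ, 1 ≤ n → c (4 * n + 2) = c (4 * n - 1))
    (h43 : ∀ n : ℕ, 1 ≤ n → c (4 * n + 3) = (c (4 * n - 1) + c n) % 2) :
    ((PowerSeries.mk fun n => (c n : ℂ)) : LaurentSeries ℂ) =
      (PowerSeries.X : PowerSeries ℂ) * ((PowerSeries.X : PowerSeries ℂ) + 1) +
        ((PowerSeries.X : PowerSeries ℂ) : LaurentSeries ℂ) ^ 3 *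
          (((PowerSeries.X : PowerSeries ℂ) : LaurentSeries ℂ) ^ 4 - 1) /
          ((((PowerSeries.X : PowerSeries ℂ) : LaurentSeries ℂ) - 1) *
            (((PowerSeries.X : PowerSeries ℂ) : LaurentSeries ℂ) ^ 4 + 1)) *
          ((PowerSeries.mk fun n =>
            if n % 4 = 0 then ((c (n / 4) : ℂ)) else 0) : LaurentSeries ℂ) := by
  have hinj := HahnSeries.ofPowerSeries_injective (Γ := ℤ) (R := ℂ)
  have h1 : (((PowerSeries.X : PowerSeries ℂ) : LaurentSeries ℂ) - 1) ≠ 0 := by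
    intro h
    have h' : ((PowerSeries.X - 1 : PowerSeries ℂ) : LaurentSeries ℂ)
        = ((0 : PowerSeries ℂ) : LaurentSeries ℂ) := by
      rw [PowerSeries.coe_sub, PowerSeries.coe_one, map_zero, h]
    have hz := hinj h'
    have hzz := congrArg (PowerSeries.constantCoeff (R := ℂ)) hz
    simp at hzz
  have h2 : (((PowerSeries.X : PowerSeries ℂ) : LaurentSeries ℂ) ^ 4 + 1) ≠ 0 := by
    intro h
    have h' : ((PowerSeries.X ^ 4 + 1 : PowerSeries ℂ) : LaurentSeries ℂ)
        = ((0 : PowerSeries ℂ) : LaurentSeries ℂ) := by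
      rw [PowerSeries.coe_add, PowerSeries.coe_one, PowerSeries.coe_pow, map_zero, h]
    have hz := hinj h'
    have hzz := congrArg (PowerSeries.constantCoeff (R := ℂ)) hz
    simp at hzz
  have keyPS : ((PowerSeries.mk fun n => (c n : ℂ))
        - PowerSeries.X * (PowerSeries.X + 1)) *
        ((PowerSeries.X - 1) * (PowerSeries.X ^ 4 + 1))
      = PowerSeries.X ^ 3 * (PowerSeries.X ^ 4 - 1) *
        (PowerSeries.mk fun n => if n % 4 = 0 then ((c (n / 4) : ℂ)) else 0) := by
    linear_combination key_ps c hcv hc0 hc1 hc2 hc3 h40 h41 h42 h43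
  have keyL := congrArg (fun p : PowerSeries ℂ => (p : LaurentSeries ℂ)) keyPS
  simp only [PowerSeries.coe_mul, PowerSeries.coe_sub, PowerSeries.coe_add,
    PowerSeries.coe_pow, PowerSeries.coe_one] at keyL
  exact laurent_helper _ _ _ _ _ (mul_ne_zero h1 h2) keyL
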